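/- Let V be a multiplicative unitary on a finite-dimensional Hilbert space H, and let ξ be a unit vector in H with H_ξ = {η : V(η⊗ξ) = η⊗ξ}. Then V(H_ξ ⊗ H_ξ) ⊆ H ⊗ H_ξ. -/

import Mathlib

open scoped InnerProductSpace ComplexOrder

noncomputable section

namespace MU

variable {ι : Type*} [Fintype ι] [DecidableEq ι]

/-- The elementary tensor `f ⊗ g` of two vectors, in the model
`H ⊗ H = EuclideanSpace ℂ (ι × ι)`. -/
def tens (f g : EuclideanSpace ℂ ι) : EuclideanSpace ℂ (ι × ι) :=
  WithLp.toLp 2 (fun p => f p.1 * g p.2)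

/-- `g ↦ f ⊗ g` as a linear map. -/
def tensL (f : EuclideanSpace ℂ ι) :
    EuclideanSpace ℂ ι →ₗ[ℂ] EuclideanSpace ℂ (ι × ι) where
  toFun g := tens f g
  map_add' x y := by
    ext p; simp [tens]; ring
  map_smul' c x := by
    ext p; simp [tens]; ring

/-- `f ↦ f ⊗ g` as a linear map. -/
def tensR (g : EuclideanSpace ℂ ι) :
    EuclideanSpace ℂ ι →ₗ[ℂ] EuclideanSpace ℂ (ι × ι) where
  toFun f := tens f g
  map_add' x y := by
    ext p; simp [tens]; ring
  map_smul' c x := by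
    ext p; simp [tens]; ring

/-- Action of a matrix on a Euclidean space vector. -/
def appM {κ : Type*} [Fintype κ] (M : Matrix κ κ ℂ) (v : EuclideanSpace ℂ κ) :
    EuclideanSpace ℂ κ :=
  WithLp.toLp 2 (fun i => ∑ j, M i j * v j)

/-- Action of a matrix as a linear map on the Euclidean space. -/
def mact {κ : Type*} [Fintype κ] (M : Matrix κ κ ℂ) :
    EuclideanSpace ℂ κ →ₗ[ℂ] EuclideanSpace ℂ κ where
  toFun := appM M
  map_add' x y := by
    ext p; simp [appM, mul_add, Finset.sum_add_distrib]
  map_smul' c x := by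
    ext p; simp only [appM, PiLp.smul_apply, smul_eq_mul, Finset.mul_sum]
    exact Finset.sum_congr rfl fun j _ => by simp only [RingHom.id_apply]; ring

/-- The leg `V₁₂` on `H ⊗ H ⊗ H`. -/
def leg12 (V : Matrix (ι × ι) (ι × ι) ℂ) : Matrix (ι × ι × ι) (ι × ι × ι) ℂ :=
  fun p q => V (p.1, p.2.1) (q.1, q.2.1) * (if p.2.2 = q.2.2 then 1 else 0)

/-- The leg `V₁₃` on `H ⊗ H ⊗ H`. -/
def leg13 (V : Matrix (ι × ι) (ι × ι) ℂ) : Matrix (ι × ι × ι) (ι × ι × ι) ℂ :=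
  fun p q => V (p.1, p.2.2) (q.1, q.2.2) * (if p.2.1 = q.2.1 then 1 else 0)

/-- The leg `V₂₃` on `H ⊗ H ⊗ H`. -/
def leg23 (V : Matrix (ι × ι) (ι × ι) ℂ) : Matrix (ι × ι × ι) (ι × ι × ι) ℂ :=
  fun p q => V (p.2.1, p.2.2) (q.2.1, q.2.2) * (if p.1 = q.1 then 1 else 0)

/-- The pentagon equation `V₁₂ V₁₃ V₂₃ = V₂₃ V₁₂`. -/
def Pentagon (V : Matrix (ι × ι) (ι × ι) ℂ) : Prop :=
  leg12 V * leg13 V * leg23 V = leg23 V * leg12 V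

/-- `V` is a multiplicative unitary: a unitary satisfying the pentagon equation. -/
def IsMU (V : Matrix (ι × ι) (ι × ι) ℂ) : Prop :=
  V * V.conjTranspose = 1 ∧ V.conjTranspose * V = 1 ∧ Pentagon V

/-- `ξ` is a fixed vector for `V`. -/
def Fixed (V : Matrix (ι × ι) (ι × ι) ℂ) (ξ : EuclideanSpace ℂ ι) : Prop :=
  ∀ η, mact V (tens ξ η) = tens ξ η

/-- `ξ` is a cofixed vector for `V`. -/
def Cofixed (V : Matrix (ι × ι) (ι × ι) ℂ) (ξ : EuclideanSpace ℂ ι) : Prop :=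
  ∀ η, mact V (tens η ξ) = tens η ξ

/-- `V` has multiplicity 1, with fixed unit vector `e` and cofixed unit vector `eHat`. -/
def Mult1 (V : Matrix (ι × ι) (ι × ι) ℂ) (e eHat : EuclideanSpace ℂ ι) : Prop :=
  ‖e‖ = 1 ∧ ‖eHat‖ = 1 ∧ Fixed V e ∧ Cofixed V eHat ∧
    (∀ ξ, Fixed V ξ → ∃ c : ℂ, ξ = c • e) ∧
    (∀ ξ, Cofixed V ξ → ∃ c : ℂ, ξ = c • eHat)

/-- A pre-subgroup of `V` (with fixed vector `e`): a unit vector `f` with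
`⟨f,e⟩ > 0` and `V(f⊗f) = f⊗f`. -/
def IsPreSubgroup (V : Matrix (ι × ι) (ι × ι) ℂ) (e f : EuclideanSpace ℂ ι) : Prop :=
  ‖f‖ = 1 ∧ 0 < ⟪f, e⟫_ℂ ∧ mact V (tens f f) = tens f f

/-- The subspace `H^f = {η : V(f⊗η) = f⊗η}`. -/
def subUp (V : Matrix (ι × ι) (ι × ι) ℂ) (f : EuclideanSpace ℂ ι) :
    Submodule ℂ (EuclideanSpace ℂ ι) :=
  LinearMap.ker ((mact V).comp (tensL f) - tensL f)

/-- The subspace `H_f = {η : V(η⊗f) = η⊗f}`. -/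
def subDown (V : Matrix (ι × ι) (ι × ι) ℂ) (f : EuclideanSpace ℂ ι) :
    Submodule ℂ (EuclideanSpace ℂ ι) :=
  LinearMap.ker ((mact V).comp (tensR f) - tensR f)

/-- The slice `L(ω_{ξ,η}) = (ω_{ξ,η} ⊗ id)(V)`. -/
def Lslice (V : Matrix (ι × ι) (ι × ι) ℂ) (ξ η : EuclideanSpace ℂ ι) : Matrix ι ι ℂ :=
  fun a b => ∑ x, ∑ y, (starRingEnd ℂ) (ξ x) * η y * V (x, a) (y, b)

/-- The slice `ρ(ω_{ξ,η}) = (id ⊗ ω_{ξ,η})(V)`. -/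
def Rslice (V : Matrix (ι × ι) (ι × ι) ℂ) (ξ η : EuclideanSpace ℂ ι) : Matrix ι ι ℂ :=
  fun a b => ∑ x, ∑ y, (starRingEnd ℂ) (ξ x) * η y * V (a, x) (b, y)

/-- The slice `L(ω) = (ω ⊗ id)(V)` of a general linear functional `ω` on `L(H)`. -/
def LslF (V : Matrix (ι × ι) (ι × ι) ℂ) (ω : Matrix ι ι ℂ →ₗ[ℂ] ℂ) : Matrix ι ι ℂ :=
  fun a b => ω (fun x y => V (x, a) (y, b))

/-- A state on `L(H)`: a unital positive linear functional. -/
def IsState (ω : Matrix ι ι ℂ →ₗ[ℂ] ℂ) : Prop :=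
  ω 1 = 1 ∧ ∀ M : Matrix ι ι ℂ, M.PosSemidef → ∃ r : ℝ, 0 ≤ r ∧ ω M = r


lemma appM_mul {κ : Type*} [Fintype κ] (A B : Matrix κ κ ℂ) (v : EuclideanSpace ℂ κ) :
    appM (A * B) v = appM A (appM B v) := by
  ext i
  show ∑ j, (∑ k, A i k * B k j) * v j = ∑ k, A i k * ∑ j, B k j * v j
  simp only [Finset.sum_mul]
  rw [Finset.sum_comm]
  simp [Finset.mul_sum, mul_assoc]

lemma appM_leg23 (V : Matrix (ι × ι) (ι × ι) ℂ) (s : EuclideanSpace ℂ (ι × ι × ι))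
    (p : ι × ι × ι) :
    appM (leg23 V) s p = ∑ q : ι × ι, V p.2 q * s (p.1, q) := by
  show ∑ q : ι × ι × ι, leg23 V p q * s q = _
  rw [Fintype.sum_prod_type]
  simp only [leg23, mul_ite, mul_one, mul_zero, ite_mul, zero_mul]
  rw [Finset.sum_comm]
  simp [Finset.sum_ite_eq]

lemma appM_leg13 (V : Matrix (ι × ι) (ι × ι) ℂ) (s : EuclideanSpace ℂ (ι × ι × ι))
    (p : ι × ι × ι) :
    appM (leg13 V) s p = ∑ q : ι × ι, V (p.1, p.2.2) q * s (q.1, p.2.1, q.2) := by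
  show ∑ q : ι × ι × ι, leg13 V p q * s q = _
  simp only [leg13, Fintype.sum_prod_type, mul_ite, mul_one, mul_zero, ite_mul, zero_mul]
  refine Finset.sum_congr rfl fun q1 _ => ?_
  rw [Finset.sum_comm]
  simp [Finset.sum_ite_eq]

lemma appM_leg12 (V : Matrix (ι × ι) (ι × ι) ℂ) (s : EuclideanSpace ℂ (ι × ι × ι))
    (p : ι × ι × ι) :
    appM (leg12 V) s p = ∑ q : ι × ι, V (p.1, p.2.1) q * s (q.1, q.2, p.2.2) := by
  show ∑ q : ι × ι × ι, leg12 V p q * s q = _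
  simp only [leg12, Fintype.sum_prod_type, mul_ite, mul_one, mul_zero, ite_mul, zero_mul]
  simp [Finset.sum_ite_eq]

lemma mem_subDown_iff (V : Matrix (ι × ι) (ι × ι) ℂ) (ξ η : EuclideanSpace ℂ ι) :
    η ∈ subDown V ξ ↔ mact V (tens η ξ) = tens η ξ := by
  rw [subDown, LinearMap.mem_ker, LinearMap.sub_apply, LinearMap.comp_apply, sub_eq_zero]
  rfl

lemma row_mem_subDown (V : Matrix (ι × ι) (ι × ι) ℂ) (hV : IsMU V)
    (ξ a b : EuclideanSpace ℂ ι) (ha : a ∈ subDown V ξ) (hb : b ∈ subDown V ξ) (i : ι) :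
    (WithLp.toLp 2 (fun k => mact V (tens a b) (i, k)) : EuclideanSpace ℂ ι) ∈ subDown V ξ := by
  rw [mem_subDown_iff] at ha hb ⊢
  set t : EuclideanSpace ℂ (ι × ι × ι) := WithLp.toLp 2 (fun p => a p.1 * (b p.2.1 * ξ p.2.2)) with ht
  have h23 : appM (leg23 V) t = t := by
    ext p
    rw [appM_leg23]
    have : ∑ q : ι × ι, V p.2 q * t (p.1, q) = a p.1 * ∑ q : ι × ι, V p.2 q * tens b ξ q := by
      rw [Finset.mul_sum]
      exact Finset.sum_congr rfl fun q _ => by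
        show V p.2 q * (a p.1 * (b q.1 * ξ q.2)) = a p.1 * (V p.2 q * (b q.1 * ξ q.2)); ring
    rw [this]
    have hb' := congrFun (congrArg WithLp.ofLp hb) p.2
    show a p.1 * (mact V (tens b ξ)) p.2 = t p
    rw [hb']
    rfl
  have h13 : appM (leg13 V) t = t := by
    ext p
    rw [appM_leg13]
    have : ∑ q : ι × ι, V (p.1, p.2.2) q * t (q.1, p.2.1, q.2)
        = b p.2.1 * ∑ q : ι × ι, V (p.1, p.2.2) q * tens a ξ q := by
      rw [Finset.mul_sum]
      exact Finset.sum_congr rfl fun q _ => by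
        show V (p.1, p.2.2) q * (a q.1 * (b p.2.1 * ξ q.2))
          = b p.2.1 * (V (p.1, p.2.2) q * (a q.1 * ξ q.2)); ring
    rw [this]
    have ha' := congrFun (congrArg WithLp.ofLp ha) (p.1, p.2.2)
    show b p.2.1 * (mact V (tens a ξ)) (p.1, p.2.2) = t p
    rw [ha']
    show b p.2.1 * (a p.1 * ξ p.2.2) = a p.1 * (b p.2.1 * ξ p.2.2)
    ring
  have h12 : ∀ p : ι × ι × ι,
      appM (leg12 V) t p = ξ p.2.2 * mact V (tens a b) (p.1, p.2.1) := by
    intro p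
    rw [appM_leg12]
    show ∑ q : ι × ι, V (p.1, p.2.1) q * (a q.1 * (b q.2 * ξ p.2.2))
        = ξ p.2.2 * ∑ q : ι × ι, V (p.1, p.2.1) q * tens a b q
    rw [Finset.mul_sum]
    exact Finset.sum_congr rfl fun q _ => by
      show V (p.1, p.2.1) q * (a q.1 * (b q.2 * ξ p.2.2))
        = ξ p.2.2 * (V (p.1, p.2.1) q * (a q.1 * b q.2)); ring
  have hpent := hV.2.2
  have hstep : appM (leg23 V) (appM (leg12 V) t) = appM (leg12 V) t := by
    have := congrArg (fun M => appM M t) hpent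
    simp only [appM_mul] at this
    rw [h23, h13] at this
    exact this.symm
  ext cd
  obtain ⟨c, d⟩ := cd
  have := congrFun (congrArg WithLp.ofLp hstep) (i, c, d)
  rw [appM_leg23] at this
  simp only [h12] at this
  show ∑ q : ι × ι, V (c, d) q * (mact V (tens a b) (i, q.1) * ξ q.2)
      = mact V (tens a b) (i, c) * ξ d
  calc ∑ q : ι × ι, V (c, d) q * (mact V (tens a b) (i, q.1) * ξ q.2)
      = ∑ q : ι × ι, V (c, d) q * (ξ q.2 * mact V (tens a b) (i, q.1)) := by
        exact Finset.sum_congr rfl fun q _ => by ring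
    _ = ξ d * mact V (tens a b) (i, c) := this
    _ = mact V (tens a b) (i, c) * ξ d := by ring

/-- `V(H_ξ ⊗ H_ξ) ⊆ H ⊗ H_ξ`. -/
theorem map_tensor_subDown_le {ι : Type*} [Fintype ι] [DecidableEq ι] [Nonempty ι]
    (V : Matrix (ι × ι) (ι × ι) ℂ) (hV : IsMU V)
    (ξ : EuclideanSpace ℂ ι) (hξ : ‖ξ‖ = 1) :
    Submodule.map (mact V) (Submodule.span ℂ
        {w | ∃ a ∈ subDown V ξ, ∃ b ∈ subDown V ξ, w = tens a b}) ≤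
      Submodule.span ℂ
        {w | ∃ a : EuclideanSpace ℂ ι, ∃ b ∈ subDown V ξ, w = tens a b} := by
  rw [Submodule.map_span, Submodule.span_le]
  rintro w ⟨u, ⟨a, ha, b, hb, rfl⟩, rfl⟩
  have hdecomp : mact V (tens a b)
      = ∑ i : ι, tens (WithLp.toLp 2 (fun j => if i = j then (1 : ℂ) else 0))
          (WithLp.toLp 2 (fun k => mact V (tens a b) (i, k))) := by
    ext p
    rw [WithLp.ofLp_sum, Finset.sum_apply]
    show mact V (tens a b) p
      = ∑ i : ι, (if i = p.1 then (1 : ℂ) else 0) * mact V (tens a b) (i, p.2)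
    simp only [ite_mul, one_mul, zero_mul]
    rw [Finset.sum_ite_eq']
    simp
  rw [hdecomp]
  refine Submodule.sum_mem _ fun i _ => Submodule.subset_span ?_
  exact ⟨WithLp.toLp 2 (fun j => if i = j then (1 : ℂ) else 0),
    WithLp.toLp 2 (fun k => mact V (tens a b) (i, k)), row_mem_subDown V hV ξ a b ha hb i, rfl⟩

end MU
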